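/- Let K : ℝ^N \ {0} → ℝ be a C¹ function satisfying |∂^α K(z)| ≤ C₀ |z|^{-N-|α|} for all multi-indices α with |α| ≤ 1, and let φ be a continuous function supported in the ball B(0, r) with ∫_{ℝ^N} φ = 0 and ‖φ‖_∞ ≤ A. Then for all z ∈ ℝ^N with |z| ≥ 3r, |(K ∗ φ)(z)| ≤ C C₀ A r^{N+1} |z|^{-(N+1)} for a constant C depending only on N. -/

import Mathlib

open MeasureTheory Real Set

noncomputable section

/-- If `K` is `C¹` away from the origin on `ℝ^N` with `|∂^α K(z)| ≤ C₀ |z|^{-N-|α|}` for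
`|α| ≤ 1`, and `φ` is continuous, supported in `B(0,r)`, with mean zero and `‖φ‖_∞ ≤ A`,
then for `|z| ≥ 3r` one has `|(K ∗ φ)(z)| ≤ C C₀ A r^{N+1} |z|^{-(N+1)}`, with `C = C(N)`. -/
theorem conv_cancellation_decay (N : ℕ) (hN : 1 ≤ N) :
    ∃ C > 0, ∀ (C₀ A r : ℝ), 0 < C₀ → 0 < A → 0 < r →
      ∀ K : EuclideanSpace ℝ (Fin N) → ℝ,
        ContDiffOn ℝ 1 K {0}ᶜ →
        (∀ z : EuclideanSpace ℝ (Fin N), z ≠ 0 → |K z| ≤ C₀ * ‖z‖ ^ (-(N : ℝ))) →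
        (∀ z : EuclideanSpace ℝ (Fin N), z ≠ 0 →
          ‖fderiv ℝ K z‖ ≤ C₀ * ‖z‖ ^ (-((N : ℝ) + 1))) →
      ∀ φ : EuclideanSpace ℝ (Fin N) → ℝ,
        Continuous φ →
        Function.support φ ⊆ Metric.closedBall 0 r →
        (∫ w, φ w) = 0 →
        (∀ w, |φ w| ≤ A) →
      ∀ z : EuclideanSpace ℝ (Fin N), 3 * r ≤ ‖z‖ →
        |∫ w, K (z - w) * φ w| ≤ C * C₀ * A * r ^ ((N : ℝ) + 1) * ‖z‖ ^ (-((N : ℝ) + 1)) := by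
  classical
  set E := EuclideanSpace ℝ (Fin N)
  set c : ℝ := (volume (Metric.closedBall (0 : E) 1)).toReal with hc_def
  have hcpos : 0 < c :=
    ENNReal.toReal_pos (Metric.measure_closedBall_pos volume 0 one_pos).ne' measure_closedBall_lt_top.ne
  refine ⟨(3/2 : ℝ)^(N+1) * c, by positivity, ?_⟩
  intro C₀ A r hC₀ hA hr K hK hK0 hK1 φ hφc hφs hφint hφA z hz
  have hz0 : 0 < ‖z‖ := lt_of_lt_of_le (by positivity) hz
  -- points of the closed ball around z are far from the origin
  have hsub : ∀ x ∈ Metric.closedBall z r, 2/3 * ‖z‖ ≤ ‖x‖ := by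
    intro x hx
    have h1 : ‖x - z‖ ≤ r := by simpa [dist_eq_norm] using hx
    have h2 : ‖z‖ - ‖x‖ ≤ ‖z - x‖ := norm_sub_norm_le z x
    rw [norm_sub_rev z x] at h2
    linarith
  have hzs : ∀ x ∈ Metric.closedBall z r, x ≠ 0 := by
    intro x hx h0
    have := hsub x hx
    rw [h0, norm_zero] at this
    nlinarith
  set M : ℝ := C₀ * (3/2 : ℝ)^(N+1) * ‖z‖ ^ (-((N:ℝ)+1)) with hM_def
  have hM0 : 0 ≤ M := by positivity
  have hexp : (-((N:ℝ)+1)) ≤ 0 := by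
    have h01 : (0:ℝ) ≤ (N:ℝ)+1 := by positivity
    linarith
  have hkey23 : ((2:ℝ)/3) ^ (-((N:ℝ)+1)) = (3/2 : ℝ)^(N+1) := by
    rw [show -((N:ℝ)+1) = -(((N+1 : ℕ)):ℝ) by push_cast; ring,
      Real.rpow_neg (by norm_num), Real.rpow_natCast, ← inv_pow]
    norm_num
  -- mean value estimate
  have hMVT : ∀ w : E, ‖w‖ ≤ r → |K (z - w) - K z| ≤ M * ‖w‖ := by
    intro w hw
    have hd : ∀ x ∈ Metric.closedBall z r, DifferentiableAt ℝ K x := fun x hx =>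
      (hK.contDiffAt (isOpen_compl_singleton.mem_nhds (hzs x hx))).differentiableAt one_ne_zero
    have hbound : ∀ x ∈ Metric.closedBall z r, ‖fderiv ℝ K x‖ ≤ M := by
      intro x hx
      refine (hK1 x (hzs x hx)).trans ?_
      have h23 : (0:ℝ) < 2/3 * ‖z‖ := by positivity
      have hle := Real.rpow_le_rpow_of_nonpos h23 (hsub x hx) hexp
      calc C₀ * ‖x‖ ^ (-((N:ℝ)+1)) ≤ C₀ * ((2/3 * ‖z‖) ^ (-((N:ℝ)+1))) :=
            mul_le_mul_of_nonneg_left hle hC₀.le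
        _ = M := by
            rw [hM_def, Real.mul_rpow (by norm_num) hz0.le, hkey23]; ring
    have hzws : z - w ∈ Metric.closedBall z r := by
      simp only [Metric.mem_closedBall, dist_eq_norm, show z - w - z = -w by abel, norm_neg]
      exact hw
    have := (convex_closedBall z r).norm_image_sub_le_of_norm_fderiv_le hd hbound
      (Metric.mem_closedBall_self hr.le) hzws
    rw [show z - w - z = -w by abel, norm_neg] at this
    simpa using this
  -- continuity and integrability of the integrand
  have hKcont : ContinuousOn K {0}ᶜ := hK.continuousOn
  have hφ0 : ∀ w : E, r < ‖w‖ → φ w = 0 := by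
    intro w hw
    by_contra h
    have := hφs h
    rw [Metric.mem_closedBall, dist_zero_right] at this
    linarith
  have hgcont : Continuous fun w : E => K (z - w) * φ w := by
    rw [continuous_iff_continuousAt]
    intro w₀
    by_cases hw₀ : ‖w₀‖ < 2 * r
    · have hzw : z - w₀ ≠ 0 := by
        intro h
        have h2 : ‖z‖ - ‖w₀‖ ≤ ‖z - w₀‖ := norm_sub_norm_le z w₀
        rw [h, norm_zero] at h2
        linarith
      have hKat : ContinuousAt K (z - w₀) :=
        hKcont.continuousAt (isOpen_compl_singleton.mem_nhds hzw)
      exact (hKat.comp ((continuous_const.sub continuous_id).continuousAt)).mul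
        hφc.continuousAt
    · have hopen : IsOpen {w : E | r < ‖w‖} := isOpen_lt continuous_const continuous_norm
      have hmem : w₀ ∈ {w : E | r < ‖w‖} := by
        push_neg at hw₀
        simp only [mem_setOf_eq]
        linarith
      have heq : (fun w : E => K (z - w) * φ w) =ᶠ[nhds w₀] fun _ => 0 :=
        Filter.eventuallyEq_of_mem (hopen.mem_nhds hmem) fun w hw => by
          simp [hφ0 w hw]
      exact (continuousAt_congr heq).mpr continuousAt_const
  have hgcs : HasCompactSupport fun w : E => K (z - w) * φ w :=
    HasCompactSupport.intro (isCompact_closedBall (0:E) r) fun x hx => by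
      rw [Metric.mem_closedBall, dist_zero_right, not_le] at hx
      simp [hφ0 x hx]
  have hg : Integrable fun w : E => K (z - w) * φ w :=
    hgcont.integrable_of_hasCompactSupport hgcs
  have hφcs : HasCompactSupport φ :=
    HasCompactSupport.intro (isCompact_closedBall (0:E) r) fun x hx => by
      rw [Metric.mem_closedBall, dist_zero_right, not_le] at hx
      exact hφ0 x hx
  have hφi : Integrable φ := hφc.integrable_of_hasCompactSupport hφcs
  -- cancellation
  have hcancel : (∫ w, K (z - w) * φ w) = ∫ w, (K (z - w) - K z) * φ w := by
    have : (∫ w, (K (z - w) - K z) * φ w)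
        = (∫ w, K (z - w) * φ w) - ∫ w, K z * φ w := by
      simp only [sub_mul]
      exact integral_sub hg (hφi.const_mul (K z))
    rw [this, integral_const_mul, hφint, mul_zero, sub_zero]
  have hsupp : ∀ w : E, w ∉ Metric.closedBall (0:E) r → (K (z - w) - K z) * φ w = 0 := by
    intro w hw
    rw [Metric.mem_closedBall, dist_zero_right, not_le] at hw
    simp [hφ0 w hw]
  have hrestrict : (∫ w, (K (z - w) - K z) * φ w)
      = ∫ w in Metric.closedBall (0:E) r, (K (z - w) - K z) * φ w :=
    (setIntegral_eq_integral_of_forall_compl_eq_zero hsupp).symm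
  have hb : ∀ w ∈ Metric.closedBall (0:E) r, ‖(K (z - w) - K z) * φ w‖ ≤ M * r * A := by
    intro w hw
    rw [Metric.mem_closedBall, dist_zero_right] at hw
    rw [norm_mul]
    have h1 : ‖K (z - w) - K z‖ ≤ M * r := by
      refine (hMVT w hw).trans ?_
      exact mul_le_mul_of_nonneg_left hw hM0
    have h2 : ‖φ w‖ ≤ A := hφA w
    exact mul_le_mul h1 h2 (norm_nonneg _) (by positivity)
  have hInt : Integrable fun w : E => (K (z - w) - K z) * φ w := by
    simpa [sub_mul, Pi.sub_def] using hg.sub (hφi.const_mul (K z))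
  have hmain := norm_setIntegral_le_of_norm_le_const (μ := volume) (measure_closedBall_lt_top) hb
  have hvol : (volume (Metric.closedBall (0:E) r)).toReal = r ^ N * c := by
    rw [Measure.addHaar_closedBall' volume (0:E) hr.le, ENNReal.toReal_mul,
      ENNReal.toReal_ofReal (by positivity), finrank_euclideanSpace_fin]
  have hrpow : r ^ ((N:ℝ)+1) = r * r ^ N := by
    rw [show ((N:ℝ)+1) = (((N+1 : ℕ)):ℝ) by push_cast; ring, Real.rpow_natCast, pow_succ]
    ring
  calc |∫ w, K (z - w) * φ w|
      = ‖∫ w in Metric.closedBall (0:E) r, (K (z - w) - K z) * φ w‖ := by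
        rw [hcancel, hrestrict, Real.norm_eq_abs]
    _ ≤ M * r * A * (volume (Metric.closedBall (0:E) r)).toReal := hmain
    _ = (3/2 : ℝ)^(N+1) * c * C₀ * A * r ^ ((N:ℝ)+1) * ‖z‖ ^ (-((N:ℝ)+1)) := by
        rw [hvol, hM_def, hrpow]; ring
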